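/- For every x ∈ {0,1}⁵ with x₁ = 0 and s ∈ {+1,−1}, one has Π_{Bb}(|φ_s⟩_x ⊗ |φ⁺⟩_{ab}) = (1/√2)|Φ_{s,x}⟩, and the 32 states |Φ_{s,x}⟩ form an orthonormal family in (ℂ²)^{⊗5} ⊗ ℂ²_a ⊗ ℂ²_b. (Step 1 of the proof of Theorem 2: Bob's measurement outcome M₁,₁ preserves orthogonality and occurs with nonzero probability on every five-qubit GHZ basis state.) -/

import Mathlib

noncomputable section

/-- View a coefficient function as a vector of the Euclidean (Hilbert) space. -/
def ofFun {ι : Type*} [Fintype ι] (f : ι → ℂ) : EuclideanSpace ℂ ι := WithLp.toLp 2 f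

/-- Transport an endomorphism of the coefficient functions to the Euclidean space. -/
def toE {ι : Type*} [Fintype ι] (T : (ι → ℂ) →ₗ[ℂ] (ι → ℂ)) :
    Module.End ℂ (EuclideanSpace ℂ ι) :=
  (WithLp.linearEquiv 2 ℂ (ι → ℂ)).symm.toLinearMap ∘ₗ T ∘ₗ
    (WithLp.linearEquiv 2 ℂ (ι → ℂ)).toLinearMap

open Classical in
/-- Diagonal orthogonal projection keeping exactly the basis vectors whose index
satisfies `f`. -/
def diagP {ι : Type*} [Fintype ι] (f : ι → Prop) : Module.End ℂ (EuclideanSpace ℂ ι) :=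
  toE (LinearMap.pi fun i => (if f i then (1 : ℂ) else 0) • LinearMap.proj i)

/-- The linear map induced by a self-inverse permutation `σ` of the basis indices:
it sends the basis vector `|x⟩` to `|σ x⟩`. -/
def permE {ι : Type*} [Fintype ι] (σ : ι → ι) : Module.End ℂ (EuclideanSpace ℂ ι) :=
  toE (LinearMap.funLeft ℂ ℂ σ)

/-- Tensor product of two vectors, realized on the product index set. -/
def tensE {ι κ : Type*} [Fintype ι] [Fintype κ]
    (u : EuclideanSpace ℂ ι) (w : EuclideanSpace ℂ κ) : EuclideanSpace ℂ (ι × κ) :=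
  ofFun fun p => u p.1 * w p.2

/-- Bitwise complement of a bit string. -/
def bcompl {n : ℕ} (x : Fin n → Fin 2) : Fin n → Fin 2 := fun i => x i + 1

/-- The sign `+1` or `−1`, indexed by a Boolean. -/
def sgn (s : Bool) : ℂ := if s then 1 else -1

/-- Computational basis vector `|x⟩` of the `n`-qubit space. -/
def ketQ {n : ℕ} (x : Fin n → Fin 2) : EuclideanSpace ℂ (Fin n → Fin 2) :=
  EuclideanSpace.single x 1

/-- The GHZ basis state `|ψ_s⟩_x = (|x⟩ + s|x̄⟩)/√2`. -/
def ghz {n : ℕ} (s : Bool) (x : Fin n → Fin 2) : EuclideanSpace ℂ (Fin n → Fin 2) :=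
  (Real.sqrt 2 : ℂ)⁻¹ • (ketQ x + sgn s • ketQ (bcompl x))

/-- The five main qubits `A,B,C,D,E` (positions `0,1,2,3,4`) together with the two
ancilla qubits `a,b` (positions `0,1` of the second factor). -/
abbrev K5 : Type := EuclideanSpace ℂ ((Fin 5 → Fin 2) × (Fin 2 → Fin 2))

/-- Basis vector of the two ancilla qubits `a, b`. -/
def ket2 (z : Fin 2 → Fin 2) : EuclideanSpace ℂ (Fin 2 → Fin 2) :=
  EuclideanSpace.single z 1

/-- The EPR state `|φ⁺⟩_{ab} = (|00⟩ + |11⟩)/√2` of the two ancilla qubits. -/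
def phiPlus : EuclideanSpace ℂ (Fin 2 → Fin 2) :=
  ofFun fun z => if z 0 = z 1 then (Real.sqrt 2 : ℂ)⁻¹ else 0

/-- The post-measurement state
`|Φ_{s,x}⟩ = (|x⟩|x₂x₂⟩_{ab} + s|x̄⟩|x̄₂x̄₂⟩_{ab})/√2`. -/
def bigPhi (s : Bool) (x : Fin 5 → Fin 2) : K5 :=
  (Real.sqrt 2 : ℂ)⁻¹ •
    (tensE (ketQ x) (ket2 fun _ => x 1) +
      sgn s • tensE (ketQ (bcompl x)) (ket2 fun _ => x 1 + 1))

/-- The projection `Π_{Bb} = |00⟩⟨00| + |11⟩⟨11|` on the pair `(B, b)`. -/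
def projBb : Module.End ℂ K5 := diagP fun p => p.1 1 = p.2 1

/-- The projection `Π_{Aa} = |00⟩⟨00| + |11⟩⟨11|` on the pair `(A, a)`. -/
def projAa : Module.End ℂ K5 := diagP fun p => p.1 0 = p.2 0

/-- The projection `|0⟩⟨0|_A ⊗ I`. -/
def proj0A : Module.End ℂ K5 := diagP fun p => p.1 0 = 0

/-- The CNOT gate with control the main qubit at position `c` and target the main
qubit `A` (position `0`), acting as the identity on the ancillas. -/
def cnotK (c : Fin 5) : Module.End ℂ K5 :=
  permE fun p => (Function.update p.1 0 (p.1 0 + p.1 c), p.2)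


open scoped ComplexConjugate

open Classical in
lemma diagP_apply' {ι : Type*} [Fintype ι] (f : ι → Prop) (v : EuclideanSpace ℂ ι) (i : ι) :
    diagP f v i = if f i then v i else 0 := by
  simp [diagP, toE, LinearMap.pi_apply]
  split_ifs <;> simp

lemma tensE_apply' {ι κ : Type*} [Fintype ι] [Fintype κ]
    (u : EuclideanSpace ℂ ι) (w : EuclideanSpace ℂ κ) (p : ι × κ) :
    tensE u w p = u p.1 * w p.2 := rfl

lemma sqrt2_ne : ((Real.sqrt 2 : ℝ) : ℂ) ≠ 0 := by
  norm_cast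
  positivity

lemma inv_sqrt2_sq : ((Real.sqrt 2 : ℝ) : ℂ)⁻¹ * ((Real.sqrt 2 : ℝ) : ℂ)⁻¹ = (2 : ℂ)⁻¹ := by
  rw [← mul_inv, ← Complex.ofReal_mul, Real.mul_self_sqrt (by norm_num)]
  norm_num

lemma funeq2 (z w : Fin 2 → Fin 2) : z = w ↔ z 0 = w 0 ∧ z 1 = w 1 := by
  rw [funext_iff, Fin.forall_fin_two]

lemma tensE_single (x : Fin 5 → Fin 2) (z : Fin 2 → Fin 2) :
    tensE (ketQ x) (ket2 z) =
      EuclideanSpace.single ((x, z) : (Fin 5 → Fin 2) × (Fin 2 → Fin 2)) 1 := by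
  ext p
  simp only [tensE_apply', ketQ, ket2, EuclideanSpace.single_apply, Prod.ext_iff]
  by_cases h1 : p.1 = x <;> by_cases h2 : p.2 = z <;> simp [h1, h2]

lemma bigPhi_eq (s : Bool) (x : Fin 5 → Fin 2) :
    bigPhi s x = (Real.sqrt 2 : ℂ)⁻¹ •
      (EuclideanSpace.single ((x, fun _ => x 1) : (Fin 5 → Fin 2) × (Fin 2 → Fin 2)) 1 +
        sgn s • EuclideanSpace.single
          ((bcompl x, fun _ => x 1 + 1) : (Fin 5 → Fin 2) × (Fin 2 → Fin 2)) 1) := by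
  rw [bigPhi, tensE_single, tensE_single]

lemma bcompl_ne (x : Fin 5 → Fin 2) : bcompl x ≠ x := by
  intro h
  have := congrFun h 0
  simp only [bcompl] at this
  omega

lemma bcompl_ne' {x y : Fin 5 → Fin 2} (hx : x 0 = 0) (hy : y 0 = 0) : x ≠ bcompl y := by
  intro h
  have := congrFun h 0
  rw [hx] at this
  simp [bcompl, hy] at this

lemma bcompl_inj {x y : Fin 5 → Fin 2} (h : bcompl x = bcompl y) : x = y := by
  funext i
  have := congrFun h i
  simp only [bcompl] at this
  omega

lemma sgn_conj (s : Bool) : conj (sgn s) = sgn s := by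
  cases s <;> simp [sgn]

/-- Step 1 of Theorem 2: `Π_{Bb}(|φ_s⟩_x ⊗ |φ⁺⟩_{ab}) = (1/√2)|Φ_{s,x}⟩`,
and the 32 states `|Φ_{s,x}⟩` form an orthonormal family. -/
theorem thm2_step1_orthogonality_preserving :
    (∀ (s : Bool) (x : Fin 5 → Fin 2), x 0 = 0 →
      projBb (tensE (ghz s x) phiPlus) = (Real.sqrt 2 : ℂ)⁻¹ • bigPhi s x) ∧
    Orthonormal ℂ (fun p : Bool × {x : Fin 5 → Fin 2 // x 0 = 0} => bigPhi p.1 p.2.1) := by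
  have h2 := inv_sqrt2_sq
  constructor
  · intro s x hx
    ext p
    obtain ⟨y, z⟩ := p
    have hRHS : (((Real.sqrt 2 : ℝ) : ℂ)⁻¹ • bigPhi s x) (y, z) =
        ((Real.sqrt 2 : ℝ) : ℂ)⁻¹ * bigPhi s x (y, z) := rfl
    rw [projBb, diagP_apply', hRHS]
    simp only [tensE_apply', ghz, phiPlus, bigPhi, ketQ, ket2, ofFun,
      PiLp.smul_apply, PiLp.add_apply, smul_eq_mul, EuclideanSpace.single_apply, PiLp.toLp_apply]
    have hxc : bcompl x ≠ x := bcompl_ne x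
    have e1 : (if z = (fun _ => x 1) then (1:ℂ) else 0)
        = if (z 0 = x 1 ∧ z 1 = x 1) then 1 else 0 := by
      congr 1
      rw [funeq2]
    have e2 : (if z = (fun _ => x 1 + 1) then (1:ℂ) else 0)
        = if (z 0 = x 1 + 1 ∧ z 1 = x 1 + 1) then 1 else 0 := by
      congr 1
      rw [funeq2]
    rw [e1, e2]
    by_cases hyx : y = x
    · have h1 : ¬ y = bcompl x := by
        rw [hyx]; exact fun h => hxc h.symm
      have hxy1 : y 1 = x 1 := by rw [hyx]
      rw [if_pos hyx, if_neg h1]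
      split_ifs <;> first | ring1 | (exfalso; omega)
    · by_cases hyc : y = bcompl x
      · have hy1 : y 1 = x 1 + 1 := by rw [hyc]; rfl
        rw [if_pos hyc, if_neg hyx]
        split_ifs <;> first | ring1 | (exfalso; omega)
      · rw [if_neg hyx, if_neg hyc]
        split_ifs <;> ring
  · rw [orthonormal_iff_ite]
    rintro ⟨s, x, hx⟩ ⟨t, y, hy⟩
    simp only [bigPhi_eq, inner_smul_left, inner_smul_right, inner_add_left, inner_add_right,
      EuclideanSpace.inner_single_left, EuclideanSpace.single_apply, map_one, one_mul,
      sgn_conj, map_inv₀, Complex.conj_ofReal, Prod.mk.injEq, Subtype.mk.injEq]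
    have hxy : ¬(bcompl x = y) := fun h => bcompl_ne' hy hx h.symm
    have hyx : ¬(x = bcompl y) := bcompl_ne' hx hy
    by_cases hxyeq : x = y
    · subst hxyeq
      simp only [hxy, hyx, false_and, if_false, mul_zero, zero_add, add_zero,
        and_self, if_true, mul_one, true_and, eq_self_iff_true]
      cases s <;> cases t <;> simp only [sgn] <;> norm_num <;>
        linear_combination 2 * h2
    · have hcc : ¬(bcompl x = bcompl y) := fun h => hxyeq (bcompl_inj h)
      have hne : ¬(s = t ∧ x = y) := fun h => hxyeq h.2
      simp [hxyeq, hxy, hyx, hcc]
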